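/- Let a_1,…,a_n be distinct nonzero real numbers and P(x) = ∏_{j=1}^n (x − a_j). Then for every (x_1,…,x_{n+2}) ∈ ℝ^{n+2}: P_{n+2}(x_1,…,x_{n+2}) − J^{σ,a}_{n+2}(x_1,…,x_{n+1}) = ((−1)^{n+1}/(n+2)) · L(xP)(x_1,…,x_{n+2}), where xP denotes the polynomial x·P(x). In particular, P_{n+2}(1, x, x²,…, x^{n+1}) − J^{σ,a}_{n+2}(1, x,…, x^n) = ((−1)^{n+1}/(n+2)) x P(x) for every x ∈ ℝ. -/
import Mathlib


/-- The Kailath–Segall polynomials, defined by `P₀ = 1` and the recurrence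
`Pₙ = (1/n)(Pₙ₋₁ x₁ − Pₙ₋₂ x₂ + ⋯ + (−1)^{n+1} P₀ xₙ)`. -/
noncomputable def KS {A : Type*} [CommRing A] [Algebra ℚ A] (x : ℕ → A) : ℕ → A
  | 0 => 1
  | n + 1 =>
      (((n : ℚ) + 1)⁻¹) •
        ∑ j ∈ Finset.range (n + 1), ((-1 : A) ^ j * KS x (n - j) * x (j + 1))
  termination_by n => n
  decreasing_by omega

/-- For `P(x) = c₀ + c₁ x + ⋯ + cₘ xᵐ` of degree `m`,
`L(P)(x₁,…,x_{m+1}) = c₀ x₁ + ⋯ + cₘ x_{m+1}` (arguments indexed from 1). -/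
noncomputable def Lpoly (P : Polynomial ℝ) (x : ℕ → ℝ) : ℝ :=
  ∑ i ∈ Finset.range (P.natDegree + 1), P.coeff i * x (i + 1)

open Polynomial

private lemma KS_succ (x : ℕ → ℝ) (n : ℕ) :
    KS x (n+1) = (((n:ℚ)+1)⁻¹) • ∑ j ∈ Finset.range (n+1), ((-1:ℝ)^j * KS x (n-j) * x (j+1)) := by
  rw [KS]

private lemma KS_congr : ∀ m : ℕ, ∀ x x' : ℕ → ℝ,
    (∀ k, 1 ≤ k → k ≤ m → x k = x' k) → KS x m = KS x' m := by
  intro m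
  induction m using Nat.strong_induction_on with
  | _ m IH =>
    intro x x' h
    match m with
    | 0 => rw [show KS x 0 = 1 from by rw [KS], show KS x' 0 = 1 from by rw [KS]]
    | n + 1 =>
      rw [KS_succ, KS_succ]
      congr 1
      apply Finset.sum_congr rfl
      intro j hj
      simp only [Finset.mem_range] at hj
      rw [IH (n - j) (by omega) x x' (fun k h1 h2 => h k h1 (by omega)),
        h (j+1) (by omega) (by omega)]

private lemma KS_diff (n : ℕ) (x x' : ℕ → ℝ)
    (h : ∀ k, 1 ≤ k → k ≤ n + 1 → x k = x' k) :
    KS x (n+2) - KS x' (n+2) = ((-1:ℝ)^(n+1) / (n+2)) * (x (n+2) - x' (n+2)) := by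
  rw [show n + 2 = (n+1) + 1 from rfl, KS_succ, KS_succ]
  rw [Rat.smul_def, Rat.smul_def, ← mul_sub, ← Finset.sum_sub_distrib]
  rw [Finset.sum_eq_single (n+1)]
  · have h0 : KS x (n + 1 - (n+1)) = 1 := by simp [show n+1-(n+1) = 0 by omega, KS]
    have h0' : KS x' (n + 1 - (n+1)) = 1 := by simp [show n+1-(n+1) = 0 by omega, KS]
    rw [h0, h0']
    push_cast
    ring
  · intro j hj hjne
    simp only [Finset.mem_range] at hj
    rw [KS_congr (n+1-j) x x' (fun k h1 h2 => h k h1 (by omega)),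
      h (j+1) (by omega) (by omega), sub_self]
  · intro hC; simp at hC

private lemma Pdeg (n : ℕ) (a : Fin n → ℝ) : (∏ j, (X - C (a j))).natDegree = n := by
  rw [natDegree_prod_of_monic _ _ (fun j (_ : j ∈ Finset.univ) => monic_X_sub_C (a j))]
  simp

private lemma Pmonic (n : ℕ) (a : Fin n → ℝ) : (∏ j, (X - C (a j))).Monic :=
  monic_prod_of_monic _ _ (fun j _ => monic_X_sub_C _)

private lemma Qdeg (n : ℕ) (a : Fin n → ℝ) :
    (X * ∏ j, (X - C (a j))).natDegree = n + 1 := by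
  rw [monic_X.natDegree_mul (Pmonic n a), natDegree_X, Pdeg, add_comm]

private lemma Lpoly_eq (n : ℕ) (a : Fin n → ℝ) (x : ℕ → ℝ) (y : Fin n → ℝ)
    (hx : ∀ k, 2 ≤ k → k ≤ n + 1 → x k = ∑ j, a j ^ k * y j) :
    Lpoly (X * ∏ j, (X - C (a j))) x = x (n+2) - ∑ j, a j ^ (n+2) * y j := by
  set P : Polynomial ℝ := ∏ j, (X - C (a j)) with hP
  rw [Lpoly, Qdeg]
  rw [Finset.sum_range_succ']
  simp only [coeff_X_mul, mul_coeff_zero, coeff_X_zero, zero_mul, add_zero]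
  rw [Finset.sum_range_succ]
  have hcn : P.coeff n = 1 := by
    have := (Pmonic n a).coeff_natDegree
    rwa [Pdeg] at this
  rw [hcn, one_mul]
  have hev : ∀ j, P.eval (a j) = 0 := fun j => by
    rw [hP, eval_prod]
    exact Finset.prod_eq_zero (Finset.mem_univ j) (by simp)
  have hsum : ∑ k ∈ Finset.range n, P.coeff k * x (k + 1 + 1)
      = - ∑ j, a j ^ (n+2) * y j := by
    have : ∀ k ∈ Finset.range n, P.coeff k * x (k+1+1)
        = ∑ j, P.coeff k * (a j ^ (k+2) * y j) := by
      intro k hk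
      simp only [Finset.mem_range] at hk
      rw [hx (k+2) (by omega) (by omega), Finset.mul_sum]
    rw [Finset.sum_congr rfl this, Finset.sum_comm]
    rw [← neg_eq_iff_eq_neg, ← Finset.sum_neg_distrib]
    apply Finset.sum_congr rfl
    intro j _
    have hevj : ∑ k ∈ Finset.range (n+1), P.coeff k * a j ^ k = 0 := by
      have := eval_eq_sum_range (p := P) (x := a j)
      rw [Pdeg, hev j] at this
      exact this.symm
    rw [Finset.sum_range_succ, hcn, one_mul] at hevj
    have h2 : ∑ k ∈ Finset.range n, P.coeff k * a j ^ k = - a j ^ n := by linarith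
    calc - ∑ k ∈ Finset.range n, P.coeff k * (a j ^ (k+2) * y j)
        = -(∑ k ∈ Finset.range n, P.coeff k * a j ^ k) * (a j ^ 2 * y j) := by
          rw [neg_mul, neg_inj, Finset.sum_mul]
          exact Finset.sum_congr rfl (fun k _ => by ring)
      _ = a j ^ (n+2) * y j := by rw [h2]; ring
  rw [hsum]; ring

/-- Let `a₁,…,aₙ` be distinct nonzero reals and `P(x) = ∏_j (x − a_j)`. For
`(x₁,…,x_{n+2}) ∈ ℝ^{n+2}`, with `(y_j)` the (unique) solution of the Vandermonde
system `x_k = Σ_j a_j^k y_j` (`k = 2,…,n+1`), `u^σ_{n+2} = Σ_j a_j^{n+2} y_j` and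
`J^{σ,a}_{n+2}(x₁,…,x_{n+1}) = P_{n+2}(x₁,…,x_{n+1},u^σ_{n+2})`:
`P_{n+2}(x₁,…,x_{n+2}) − J^{σ,a}_{n+2}(x₁,…,x_{n+1})
  = ((−1)^{n+1}/(n+2)) L(xP)(x₁,…,x_{n+2})`;
in particular
`P_{n+2}(1,x,…,x^{n+1}) − J^{σ,a}_{n+2}(1,x,…,xⁿ) = ((−1)^{n+1}/(n+2)) x P(x)`. -/
theorem kailathSegall_minus_J_sigma (n : ℕ) (a : Fin n → ℝ)
    (ha : Function.Injective a) (ha0 : ∀ j, a j ≠ 0) :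
    (∀ x : ℕ → ℝ, ∀ y : Fin n → ℝ,
      (∀ k, 2 ≤ k → k ≤ n + 1 → x k = ∑ j, a j ^ k * y j) →
      KS x (n + 2) -
          KS (fun k => if k = n + 2 then ∑ j, a j ^ (n + 2) * y j else x k) (n + 2) =
        ((-1 : ℝ) ^ (n + 1) / (n + 2)) *
          Lpoly (Polynomial.X * ∏ j, (Polynomial.X - Polynomial.C (a j))) x) ∧
    (∀ x0 : ℝ, ∀ y : Fin n → ℝ,
      (∀ k, 2 ≤ k → k ≤ n + 1 → x0 ^ (k - 1) = ∑ j, a j ^ k * y j) →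
      KS (fun k => x0 ^ (k - 1)) (n + 2) -
          KS (fun k => if k = n + 2 then ∑ j, a j ^ (n + 2) * y j
            else x0 ^ (k - 1)) (n + 2) =
        ((-1 : ℝ) ^ (n + 1) / (n + 2)) *
          (x0 * Polynomial.eval x0 (∏ j, (Polynomial.X - Polynomial.C (a j))))) := by
  have part1 : ∀ x : ℕ → ℝ, ∀ y : Fin n → ℝ,
      (∀ k, 2 ≤ k → k ≤ n + 1 → x k = ∑ j, a j ^ k * y j) →
      KS x (n + 2) -
          KS (fun k => if k = n + 2 then ∑ j, a j ^ (n + 2) * y j else x k) (n + 2) =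
        ((-1 : ℝ) ^ (n + 1) / (n + 2)) *
          Lpoly (X * ∏ j, (X - C (a j))) x := by
    intro x y hx
    set x' : ℕ → ℝ := fun k => if k = n + 2 then ∑ j, a j ^ (n + 2) * y j else x k with hx'
    have hag : ∀ k, 1 ≤ k → k ≤ n + 1 → x k = x' k := by
      intro k h1 h2
      simp only [hx', if_neg (by omega : ¬ k = n + 2)]
    rw [KS_diff n x x' hag, Lpoly_eq n a x y hx]
    have : x' (n+2) = ∑ j, a j ^ (n + 2) * y j := by simp [hx']
    rw [this]
  refine ⟨part1, ?_⟩
  intro x0 y hx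
  have hL : Lpoly (X * ∏ j, (X - C (a j))) (fun k => x0 ^ (k - 1))
      = x0 * Polynomial.eval x0 (∏ j, (X - C (a j))) := by
    rw [Lpoly, Qdeg]
    simp only [Nat.add_sub_cancel]
    rw [← eval_eq_sum_range' (n := n + 2) (by rw [Qdeg]; omega) x0]
    simp [eval_mul]
  rw [← hL]
  exact part1 (fun k => x0 ^ (k - 1)) y hx
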